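/- (Iterative layer reduction.) Let F be a field, d ≥ 2, 1 ≤ m ≤ n_d, and let S_1,…,S_{n_d} : [n_1] × ⋯ × [n_{d−1}] → F be tensors such that S_1,…,S_m are linearly independent as vectors in F^{n_1 ⋯ n_{d−1}}. Then there exist constants c_{i,j} ∈ F for i ∈ {1,…,m} and j ∈ {m+1,…,n_d} such that rank_F([S_1|⋯|S_{n_d}]) ≥ rank_F([S_{m+1} + Σ_{i=1}^m c_{i,m+1} S_i | ⋯ | S_{n_d} + Σ_{i=1}^m c_{i,n_d} S_i]) + m. -/

import Mathlib

/-- The tensor rank of an order-`(e+1)` tensor presented as `m` layers of an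
order-`e` tensor of shape `[n 0] × ⋯ × [n (e-1)]`: the least `r` such that the
layered tensor is a sum of `r` simple tensors. -/
noncomputable def layeredRank (F : Type*) [Field F] {e : ℕ} {n : Fin e → ℕ} {m : ℕ}
    (T : ((j : Fin e) → Fin (n j)) → Fin m → F) : ℕ :=
  sInf {r : ℕ | ∃ (v : Fin r → (j : Fin e) → Fin (n j) → F) (w : Fin r → Fin m → F),
    ∀ i l, T i l = ∑ kk, (∏ j, v kk j (i j)) * w kk l}

open Finset Module Matrix

/-- Any layered tensor has a finite decomposition, so the `sInf` set is nonempty. -/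
lemma layeredRank_set_nonempty (F : Type*) [Field F] {e : ℕ} {n : Fin e → ℕ} {m : ℕ}
    (T : ((j : Fin e) → Fin (n j)) → Fin m → F) :
    {r : ℕ | ∃ (v : Fin r → (j : Fin e) → Fin (n j) → F) (w : Fin r → Fin m → F),
      ∀ i l, T i l = ∑ kk, (∏ j, v kk j (i j)) * w kk l}.Nonempty := by
  classical
  obtain eqv : Fin (Fintype.card ((j : Fin e) → Fin (n j))) ≃ ((j : Fin e) → Fin (n j)) :=
    (Fintype.equivFin ((j : Fin e) → Fin (n j))).symm
  refine ⟨Fintype.card ((j : Fin e) → Fin (n j)), fun k j x => if x = eqv k j then 1 else 0, fun k l => T (eqv k) l, ?_⟩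
  intro i l
  have key : ∀ k, (∏ j, if i j = eqv k j then (1 : F) else 0) =
      if eqv.symm i = k then 1 else 0 := by
    intro k
    by_cases h : eqv.symm i = k
    · subst h
      simp
    · rw [if_neg h]
      have : ¬ (∀ j, i j = eqv k j) := by
        intro hall
        exact h (by rw [show i = eqv k from funext hall]; simp)
      push_neg at this
      obtain ⟨j, hj⟩ := this
      exact Finset.prod_eq_zero (Finset.mem_univ j) (by rw [if_neg hj])
  simp_rw [key]
  rw [Finset.sum_eq_single (eqv.symm i)]
  · simp
  · intro b _ hb
    rw [if_neg (fun h => hb h.symm), zero_mul]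
  · simp

/-- Iterative layer reduction: for an order-`(e+1)` tensor (`e ≥ 1`, i.e. order
`d = e + 1 ≥ 2`) with layers `S 0, …, S (m+p-1)` along the last axis, where the
first `m` layers (`1 ≤ m`) are linearly independent, there exist constants
`c : Fin m → Fin p → F` such that eliminating the first `m` layers drops
the rank by at least `m`. -/
theorem stmt4 (F : Type*) [Field F] (e : ℕ) (he : 1 ≤ e) (n : Fin e → ℕ) (m p : ℕ)
    (hm : 1 ≤ m)
    (S : Fin (m + p) → ((j : Fin e) → Fin (n j)) → F)
    (hS : LinearIndependent F (fun i : Fin m => S (Fin.castAdd p i))) :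
    ∃ c : Fin m → Fin p → F,
      layeredRank F
          (fun i l => S (Fin.natAdd m l) i + ∑ kk : Fin m, c kk l * S (Fin.castAdd p kk) i)
        + m ≤ layeredRank F (fun i l => S l i) := by
  classical
  set r := layeredRank F (fun i l => S l i) with hr
  obtain ⟨v, w, hvw⟩ :
      ∃ (v : Fin r → (j : Fin e) → Fin (n j) → F)
        (w : Fin r → Fin (m + p) → F),
        ∀ i l, S l i = ∑ kk, (∏ j, v kk j (i j)) * w kk l :=
    Nat.sInf_mem (layeredRank_set_nonempty F fun i l => S l i)
  set a : Fin r → ((j : Fin e) → Fin (n j)) → F := fun k i => ∏ j, v k j (i j) with ha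
  -- the matrix whose rows are coefficient vectors of the first m layers
  set A : Matrix ((j : Fin e) → Fin (n j)) (Fin r) F := fun i k => a k i with hA
  set W : Matrix (Fin r) (Fin m) F := fun k l => w k (Fin.castAdd p l) with hW
  -- columns of W are linearly independent
  have hScol : ∀ l : Fin m, S (Fin.castAdd p l) = A.mulVecLin (Wᵀ l) := by
    intro l
    funext i
    simp only [Matrix.mulVecLin_apply, Matrix.mulVec, dotProduct, hA, hW,
      Matrix.transpose_apply]
    rw [hvw i (Fin.castAdd p l)]
    rfl
  have hcols : LinearIndependent F (fun l : Fin m => Wᵀ l) := by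
    apply LinearIndependent.of_comp A.mulVecLin
    convert hS using 1
    funext l
    exact (hScol l).symm
    rfl
  -- rows of W span all of F^m
  have hrankWT : Wᵀ.rank = m := by
    rw [LinearIndependent.rank_matrix (M := Wᵀ) hcols, Fintype.card_fin]
  have hspan : Submodule.span F (Set.range W) = ⊤ := by
    apply Submodule.eq_top_of_finrank_eq
    have := W.rank_eq_finrank_span_row
    rw [← Matrix.rank_transpose, hrankWT] at this
    erw [← this, finrank_pi]
    simp
  -- extract a basis of F^m from among the rows of W
  obtain ⟨b, hbsub, hbspan, hbind⟩ := exists_linearIndependent F (Set.range W)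
  rw [hspan] at hbspan
  have hbfin : b.Finite := (Set.finite_range W).subset hbsub
  have : Fintype b := hbfin.fintype
  have hB : Basis b F (Fin m → F) := Basis.mk hbind (by rw [Subtype.range_coe, hbspan])
  have hcardb : Fintype.card b = m := by
    have := Module.finrank_eq_card_basis hB
    rw [finrank_pi] at this
    simpa using this.symm
  obtain eqv : Fin m ≃ b := (Fintype.equivFinOfCardEq hcardb).symm
  -- indices of the chosen rows
  have hpick : ∀ x : b, ∃ k : Fin r, W k = (x : Fin m → F) := fun x => hbsub x.2
  choose g hg using hpick
  set K : Fin m → Fin r := fun i => g (eqv i) with hK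
  have hKW : ∀ i, W (K i) = ((eqv i : b) : Fin m → F) := fun i => hg (eqv i)
  have hKinj : Function.Injective K := by
    intro i i' hii
    have : ((eqv i : b) : Fin m → F) = ((eqv i' : b) : Fin m → F) := by
      rw [← hKW, ← hKW, hii]
    exact eqv.injective (Subtype.ext this)
  -- the m×m submatrix on rows K is invertible
  set M : Matrix (Fin m) (Fin m) F := fun i l => W (K i) l with hM
  have hMrows : LinearIndependent F (fun i => M i) := by
    have : (fun i => M i) = (Subtype.val : b → (Fin m → F)) ∘ eqv := by
      funext i; exact hKW i
    rw [this]
    exact hbind.comp eqv eqv.injective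
  have hMunit : IsUnit M := Matrix.linearIndependent_rows_iff_isUnit.mp hMrows
  -- define the elimination constants
  set c : Fin m → Fin p → F :=
    fun kk l => -(M⁻¹.mulVec (fun i => w (K i) (Fin.natAdd m l))) kk with hc
  refine ⟨c, ?_⟩
  -- the new coefficient vectors
  set w' : Fin r → Fin p → F :=
    fun k l => w k (Fin.natAdd m l) + ∑ kk, c kk l * w k (Fin.castAdd p kk) with hw'
  have hw'K : ∀ (i : Fin m) (l : Fin p), w' (K i) l = 0 := by
    intro i l
    have hMc : ∀ i, ∑ kk, c kk l * M i kk = -(w (K i) (Fin.natAdd m l)) := by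
      intro i
      have h1 : M.mulVec (M⁻¹.mulVec (fun i => w (K i) (Fin.natAdd m l)))
          = fun i => w (K i) (Fin.natAdd m l) := by
        rw [Matrix.mulVec_mulVec, Matrix.mul_nonsing_inv M
          (Matrix.isUnit_iff_isUnit_det M |>.mp hMunit), Matrix.one_mulVec]
      have h2 := congrFun h1 i
      simp only [Matrix.mulVec, dotProduct] at h2 ⊢
      simp only [hc, mul_neg, neg_mul, Finset.sum_neg_distrib]
      rw [neg_inj]
      rw [← h2]
      exact Finset.sum_congr rfl fun kk _ => mul_comm _ _
    have := hMc i
    simp only [hw', hM] at *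
    rw [this]
    ring
  -- the new tensor decomposes using only rows outside the range of K
  set T' : ((j : Fin e) → Fin (n j)) → Fin p → F :=
    fun i l => S (Fin.natAdd m l) i + ∑ kk : Fin m, c kk l * S (Fin.castAdd p kk) i with hT'
  have hT'decomp : ∀ (i : (j : Fin e) → Fin (n j)) (l : Fin p), T' i l = ∑ k, a k i * w' k l := by
    intro i l
    have h1 : ∀ kk : Fin m, c kk l * S (Fin.castAdd p kk) i
        = ∑ k, a k i * (c kk l * w k (Fin.castAdd p kk)) := by
      intro kk
      rw [hvw i (Fin.castAdd p kk), Finset.mul_sum]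
      exact Finset.sum_congr rfl fun k _ => by ring
    show S (Fin.natAdd m l) i + ∑ kk : Fin m, c kk l * S (Fin.castAdd p kk) i
        = ∑ k, a k i * w' k l
    simp_rw [h1]
    rw [Finset.sum_comm, hvw i (Fin.natAdd m l), ← Finset.sum_add_distrib]
    refine Finset.sum_congr rfl fun k _ => ?_
    rw [hw']
    rw [mul_add, Finset.mul_sum]
  -- sum only over the complement of range K
  have hmr : m ≤ r := by
    calc m = Fintype.card (Fin m) := (Fintype.card_fin m).symm
    _ ≤ Fintype.card (Fin r) := Fintype.card_le_of_injective K hKinj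
    _ = r := Fintype.card_fin r
  have hcardcompl : Fintype.card ((Set.range K)ᶜ : Set (Fin r)) = r - m := by
    rw [Fintype.card_compl_set, Set.card_range_of_injective hKinj]
    simp
  obtain ceqv : Fin (r - m) ≃ ((Set.range K)ᶜ : Set (Fin r)) :=
    (Fintype.equivFinOfCardEq hcardcompl).symm
  have hdecomp2 : ∀ (i : (j : Fin e) → Fin (n j)) (l : Fin p),
      T' i l = ∑ q : Fin (r - m), a (ceqv q : Fin r) i * w' (ceqv q : Fin r) l := by
    intro i l
    rw [hT'decomp i l]
    rw [← Finset.sum_compl_add_sum ((Set.range K).toFinset) (fun k => a k i * w' k l)]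
    have hz : ∑ k ∈ (Set.range K).toFinset, a k i * w' k l = 0 := by
      apply Finset.sum_eq_zero
      intro k hk
      rw [Set.mem_toFinset] at hk
      obtain ⟨ii, rfl⟩ := hk
      rw [hw'K ii l, mul_zero]
    rw [hz, add_zero]
    rw [Finset.sum_subtype (p := fun x => x ∈ ((Set.range K)ᶜ : Set (Fin r)))
      ((Set.range K).toFinsetᶜ)
      (fun x => by simp [Set.mem_toFinset]) (fun k => a k i * w' k l)]
    exact (Equiv.sum_comp ceqv (fun x : ((Set.range K)ᶜ : Set (Fin r)) =>
      a (x : Fin r) i * w' (x : Fin r) l)).symm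
  have hle : layeredRank F T' ≤ r - m := by
    apply Nat.sInf_le
    exact ⟨fun q => v (ceqv q : Fin r), fun q => w' (ceqv q : Fin r), hdecomp2⟩
  have : layeredRank F T' + m ≤ (r - m) + m := by omega
  rw [Nat.sub_add_cancel hmr] at this
  exact this
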